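/- Let G be a connected simple graph on n ≥ 3 vertices with m edges, let 1/2 ≤ α < 1, and let η be the number of eigenvalues ρ_i of A_α(G) with ρ_i ≥ 2αm/n. Then E^{A_α}(G) ≤ 2(n−1) + 2(η−1)(αn−1) − 4αηm/n, with equality if and only if G is the complete graph K_n. -/

import Mathlib

open Matrix Finset

noncomputable def alphaMatrix {n : ℕ} (G : SimpleGraph (Fin n)) [DecidableRel G.Adj] (α : ℝ) :
    Matrix (Fin n) (Fin n) ℝ :=
  α • Matrix.diagonal (fun v => (G.degree v : ℝ)) + (1 - α) • (G.adjMatrix ℝ)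

lemma adjMatrix_isHermitian {n : ℕ} (G : SimpleGraph (Fin n)) [DecidableRel G.Adj] :
    (G.adjMatrix ℝ).IsHermitian := by
  rw [Matrix.IsHermitian, conjTranspose_eq_transpose_of_trivial]
  exact (G.isSymm_adjMatrix (α := ℝ))

lemma alphaMatrix_isHermitian {n : ℕ} (G : SimpleGraph (Fin n)) [DecidableRel G.Adj] (α : ℝ) :
    (alphaMatrix G α).IsHermitian := by
  rw [Matrix.IsHermitian, conjTranspose_eq_transpose_of_trivial]
  unfold alphaMatrix
  rw [Matrix.transpose_add, Matrix.transpose_smul, Matrix.transpose_smul,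
    Matrix.diagonal_transpose, (G.isSymm_adjMatrix (α := ℝ))]

noncomputable def zagreb {n : ℕ} (G : SimpleGraph (Fin n)) [DecidableRel G.Adj] : ℝ :=
  ∑ v, (G.degree v : ℝ) ^ 2

noncomputable def alphaEnergy {n : ℕ} (G : SimpleGraph (Fin n)) [DecidableRel G.Adj] (α : ℝ) : ℝ :=
  ∑ i, |(alphaMatrix_isHermitian G α).eigenvalues i
        - 2 * α * (G.edgeFinset.card : ℝ) / n|

noncomputable def adjEnergy {n : ℕ} (G : SimpleGraph (Fin n)) [DecidableRel G.Adj] : ℝ :=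
  ∑ i, |(adjMatrix_isHermitian G).eigenvalues i|

/-! ### Auxiliary lemmas -/

lemma degree_eq_sum_ite {n : ℕ} (G : SimpleGraph (Fin n)) [DecidableRel G.Adj] (v : Fin n) :
    (G.degree v : ℝ) = ∑ u, if G.Adj v u then (1:ℝ) else 0 := by
  rw [← SimpleGraph.card_neighborFinset_eq_degree, SimpleGraph.neighborFinset_eq_filter,
    Finset.card_filter]
  push_cast
  simp

lemma quadForm {n : ℕ} (G : SimpleGraph (Fin n)) [DecidableRel G.Adj] (α : ℝ) (x : Fin n → ℝ) :
    x ⬝ᵥ (alphaMatrix G α *ᵥ x) =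
      ∑ v, ∑ u, if G.Adj v u then α * x v ^ 2 + (1 - α) * (x v * x u) else 0 := by
  unfold alphaMatrix
  rw [Matrix.add_mulVec, dotProduct_add, Matrix.smul_mulVec, Matrix.smul_mulVec,
    dotProduct_smul, dotProduct_smul, SimpleGraph.dotProduct_mulVec_adjMatrix]
  have h1 : x ⬝ᵥ (Matrix.diagonal (fun v => (G.degree v : ℝ)) *ᵥ x)
      = ∑ v, ∑ u, if G.Adj v u then x v ^ 2 else 0 := by
    simp only [Matrix.mulVec_diagonal, dotProduct]
    refine Finset.sum_congr rfl fun v _ => ?_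
    rw [degree_eq_sum_ite, Finset.sum_mul, Finset.mul_sum]
    refine Finset.sum_congr rfl fun u _ => ?_
    by_cases h : G.Adj v u <;> simp [h] <;> ring
  rw [h1, smul_eq_mul, smul_eq_mul, Finset.mul_sum, Finset.mul_sum, ← Finset.sum_add_distrib]
  refine Finset.sum_congr rfl fun v _ => ?_
  rw [Finset.mul_sum, Finset.mul_sum, ← Finset.sum_add_distrib]
  refine Finset.sum_congr rfl fun u _ => ?_
  by_cases h : G.Adj v u <;> simp [h]

lemma alphaMatrix_psd {n : ℕ} (G : SimpleGraph (Fin n)) [DecidableRel G.Adj] {α : ℝ}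
    (hα0 : 1/2 ≤ α) (hα1 : α ≤ 1) (x : Fin n → ℝ) :
    0 ≤ x ⬝ᵥ (alphaMatrix G α *ᵥ x) := by
  rw [quadForm]
  set f : Fin n → Fin n → ℝ :=
    fun v u => if G.Adj v u then α * x v ^ 2 + (1 - α) * (x v * x u) else 0 with hf
  have hswap : ∑ v, ∑ u, f v u = ∑ v, ∑ u, f u v := Finset.sum_comm
  have h2 : 2 * (∑ v, ∑ u, f v u) = ∑ v : Fin n, ∑ u : Fin n,
      if G.Adj v u then α * (x v ^ 2 + x u ^ 2) + 2 * (1 - α) * (x v * x u) else 0 := by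
    rw [two_mul]
    nth_rewrite 2 [hswap]
    rw [← Finset.sum_add_distrib]
    refine Finset.sum_congr rfl fun v _ => ?_
    rw [← Finset.sum_add_distrib]
    refine Finset.sum_congr rfl fun u _ => ?_
    by_cases h : G.Adj v u
    · simp [hf, h, h.symm]; ring
    · have h' : ¬ G.Adj u v := fun h' => h h'.symm
      simp [hf, h, h']
  have hnn : 0 ≤ 2 * (∑ v, ∑ u, f v u) := by
    rw [h2]
    refine Finset.sum_nonneg fun v _ => Finset.sum_nonneg fun u _ => ?_
    by_cases h : G.Adj v u
    · simp only [h, if_true]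
      nlinarith [sq_nonneg (x v + x u), sq_nonneg (x v), sq_nonneg (x u)]
    · simp [h]
  linarith

lemma compl_degree_real {n : ℕ} (G : SimpleGraph (Fin n)) [DecidableRel G.Adj]
    [DecidableRel Gᶜ.Adj] (v : Fin n) :
    (Gᶜ.degree v : ℝ) = (n : ℝ) - 1 - G.degree v := by
  have h1 : G.degree v < n := by
    have := G.degree_lt_card_verts v
    simpa using this
  have h2 : Gᶜ.degree v = n - 1 - G.degree v := by
    have := G.degree_compl (v := v)
    simpa using this
  rw [h2]
  have : G.degree v ≤ n - 1 := by omega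
  push_cast [Nat.cast_sub this, Nat.cast_sub (by omega : 1 ≤ n)]
  ring

lemma alphaMatrix_apply' {n : ℕ} (G : SimpleGraph (Fin n)) [DecidableRel G.Adj] (α : ℝ)
    (v u : Fin n) :
    alphaMatrix G α v u = (if v = u then α * G.degree v else 0)
      + (if G.Adj v u then (1 - α) else 0) := by
  unfold alphaMatrix
  simp only [Matrix.add_apply, Matrix.smul_apply, Matrix.diagonal_apply,
    SimpleGraph.adjMatrix_apply, smul_eq_mul]
  by_cases h : v = u <;> by_cases ha : G.Adj v u <;> simp [h, ha] <;> ring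

lemma alphaMatrix_rowsum {n : ℕ} (G : SimpleGraph (Fin n)) [DecidableRel G.Adj] (α : ℝ)
    (v : Fin n) : ∑ u, alphaMatrix G α v u = (G.degree v : ℝ) := by
  rw [Finset.sum_congr rfl (fun u _ => alphaMatrix_apply' G α v u), Finset.sum_add_distrib,
    Finset.sum_ite_eq Finset.univ v (fun _ => α * (G.degree v : ℝ)), if_pos (Finset.mem_univ v)]
  have h : ∑ u, (if G.Adj v u then (1-α : ℝ) else 0) = (1 - α) * G.degree v := by
    rw [degree_eq_sum_ite, Finset.mul_sum]
    refine Finset.sum_congr rfl fun u _ => ?_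
    by_cases h : G.Adj v u <;> simp [h]
  rw [h]
  ring

lemma compl_quad {n : ℕ} (G : SimpleGraph (Fin n)) [DecidableRel G.Adj]
    [DecidableRel Gᶜ.Adj] (α : ℝ) (x : Fin n → ℝ) :
    x ⬝ᵥ (alphaMatrix G α *ᵥ x) + x ⬝ᵥ (alphaMatrix Gᶜ α *ᵥ x)
      = (α * n - 1) * (∑ v, x v ^ 2) + (1 - α) * (∑ v, x v) ^ 2 := by
  have expand : ∀ (M : Matrix (Fin n) (Fin n) ℝ),
      x ⬝ᵥ (M *ᵥ x) = ∑ v, ∑ u, x v * (M v u) * x u := by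
    intro M
    simp only [dotProduct, mulVec, dotProduct, Finset.mul_sum]
    refine Finset.sum_congr rfl fun v _ => Finset.sum_congr rfl fun u _ => by ring
  rw [expand, expand, ← Finset.sum_add_distrib]
  have key : ∀ v : Fin n,
      (∑ u, x v * alphaMatrix G α v u * x u) + (∑ u, x v * alphaMatrix Gᶜ α v u * x u)
      = (α * n - 1) * x v ^ 2 + (1 - α) * (x v * ∑ u, x u) := by
    intro v
    rw [← Finset.sum_add_distrib]
    have step : ∀ u : Fin n, x v * alphaMatrix G α v u * x u + x v * alphaMatrix Gᶜ α v u * x u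
        = (if v = u then (α * n - 1) * x v ^ 2 else 0) + (1 - α) * (x v * x u) := by
      intro u
      rw [alphaMatrix_apply', alphaMatrix_apply', compl_degree_real]
      by_cases h : v = u
      · subst h
        have h2 : ¬ Gᶜ.Adj v v := Gᶜ.irrefl
        simp only [if_pos rfl, if_neg (G.irrefl), if_neg h2, if_true]
        ring
      · by_cases ha : G.Adj v u
        · have h2 : ¬ Gᶜ.Adj v u := by simp [SimpleGraph.compl_adj, ha]
          simp only [if_neg h, if_pos ha, if_neg h2]
          ring
        · have h2 : Gᶜ.Adj v u := by simp [SimpleGraph.compl_adj, h, ha]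
          simp only [if_neg h, if_neg ha, if_pos h2]
          ring
    rw [Finset.sum_congr rfl (fun u _ => step u), Finset.sum_add_distrib,
      Finset.sum_ite_eq Finset.univ v (fun _ => (α * n - 1) * x v ^ 2), if_pos (Finset.mem_univ v),
      ← Finset.mul_sum, Finset.mul_sum, Finset.mul_sum]
    simp [Finset.mul_sum]
  rw [Finset.sum_congr rfl (fun v _ => key v), Finset.sum_add_distrib, ← Finset.mul_sum,
    ← Finset.mul_sum, ← Finset.sum_mul, sq (∑ v, x v)]

lemma quad_le {n : ℕ} (G : SimpleGraph (Fin n)) [DecidableRel G.Adj] {α : ℝ}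
    (hα0 : 1/2 ≤ α) (hα1 : α ≤ 1) (x : Fin n → ℝ) :
    x ⬝ᵥ (alphaMatrix G α *ᵥ x) ≤ (α * n - 1) * (∑ v, x v ^ 2) + (1 - α) * (∑ v, x v) ^ 2 := by
  have h1 := compl_quad G α x
  have h2 := alphaMatrix_psd Gᶜ hα0 hα1 x
  linarith

lemma sum_sq_ident {n : ℕ} (x : Fin n → ℝ) :
    ∑ v : Fin n, ∑ u : Fin n, (x v - x u) ^ 2
      = 2 * n * (∑ v, x v ^ 2) - 2 * (∑ v, x v) ^ 2 := by
  have key : ∀ v : Fin n, ∑ u : Fin n, (x v - x u) ^ 2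
      = n * x v ^ 2 - 2 * x v * (∑ u, x u) + (∑ u, x u ^ 2) := by
    intro v
    have : ∀ u : Fin n, (x v - x u)^2 = x v ^ 2 - 2 * x v * x u + x u ^ 2 := fun u => by ring
    rw [Finset.sum_congr rfl (fun u _ => this u), Finset.sum_add_distrib,
      Finset.sum_sub_distrib, Finset.sum_const, ← Finset.mul_sum]
    simp [Finset.card_univ, nsmul_eq_mul]
  rw [Finset.sum_congr rfl (fun v _ => key v), Finset.sum_add_distrib, Finset.sum_sub_distrib,
    Finset.sum_const, ← Finset.mul_sum, ← Finset.sum_mul]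
  have h2 : ∑ v : Fin n, 2 * x v = 2 * ∑ v, x v := by rw [Finset.mul_sum]
  rw [h2]
  simp only [Finset.card_univ, Fintype.card_fin, nsmul_eq_mul]
  ring

lemma cs_ineq {n : ℕ} (x : Fin n → ℝ) : (∑ v, x v) ^ 2 ≤ n * (∑ v, x v ^ 2) := by
  have h := sum_sq_ident x
  have hnn : (0:ℝ) ≤ ∑ v : Fin n, ∑ u : Fin n, (x v - x u) ^ 2 :=
    Finset.sum_nonneg fun v _ => Finset.sum_nonneg fun u _ => sq_nonneg _
  linarith

lemma cs_eq_const {n : ℕ} (x : Fin n → ℝ) (h : (∑ v, x v) ^ 2 = n * (∑ v, x v ^ 2)) :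
    ∀ v u : Fin n, x v = x u := by
  intro v u
  have hid := sum_sq_ident x
  have h0 : ∑ v : Fin n, ∑ u : Fin n, (x v - x u) ^ 2 = 0 := by linarith
  have h1 := (Finset.sum_eq_zero_iff_of_nonneg
    (fun v _ => Finset.sum_nonneg fun u _ => sq_nonneg (x v - x u))).mp h0 v (Finset.mem_univ v)
  have h2 := (Finset.sum_eq_zero_iff_of_nonneg (fun u _ => sq_nonneg (x v - x u))).mp
    h1 u (Finset.mem_univ u)
  have := sq_eq_zero_iff.mp h2
  linarith
section EigenGeneric
variable {n : ℕ} {A : Matrix (Fin n) (Fin n) ℝ} (hA : A.IsHermitian)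

lemma eig_dot (i j : Fin n) :
    (⇑(hA.eigenvectorBasis i) : Fin n → ℝ) ⬝ᵥ (⇑(hA.eigenvectorBasis j) : Fin n → ℝ)
      = if i = j then 1 else 0 := by
  have h := orthonormal_iff_ite.mp hA.eigenvectorBasis.orthonormal i j
  rw [← h, EuclideanSpace.inner_eq_star_dotProduct]
  simp [dotProduct, WithLp.equiv, mul_comm]

lemma eig_unit (i : Fin n) :
    ∑ u, (hA.eigenvectorBasis i : Fin n → ℝ) u ^ 2 = 1 := by
  have h := eig_dot hA i i
  rw [if_pos rfl] at h
  rw [← h]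
  exact Finset.sum_congr rfl fun u _ => (sq _)

lemma eig_rayleigh (i : Fin n) :
    (⇑(hA.eigenvectorBasis i) : Fin n → ℝ) ⬝ᵥ (A *ᵥ (⇑(hA.eigenvectorBasis i) : Fin n → ℝ))
      = hA.eigenvalues i := by
  rw [hA.mulVec_eigenvectorBasis, dotProduct_smul, smul_eq_mul, eig_dot hA i i]
  simp

lemma eig_sum_trace : ∑ i, hA.eigenvalues i = A.trace := by
  have h : A.trace
      = (Matrix.diagonal (RCLike.ofReal ∘ hA.eigenvalues) : Matrix (Fin n) (Fin n) ℝ).trace := by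
    conv_lhs => rw [hA.spectral_theorem]
    rw [Unitary.conjStarAlgAut_apply, Matrix.trace_mul_cycle, Unitary.coe_star_mul_self, Matrix.one_mul]
  rw [h, Matrix.trace_diagonal]
  simp

end EigenGeneric

lemma alphaMatrix_trace {n : ℕ} (G : SimpleGraph (Fin n)) [DecidableRel G.Adj] (α : ℝ) :
    (alphaMatrix G α).trace = 2 * α * (G.edgeFinset.card : ℝ) := by
  unfold alphaMatrix
  rw [Matrix.trace_add, Matrix.trace_smul, Matrix.trace_smul, Matrix.trace_diagonal,
    SimpleGraph.trace_adjMatrix, smul_zero, add_zero, smul_eq_mul]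
  have h : ∑ v, (G.degree v : ℝ) = 2 * (G.edgeFinset.card : ℝ) := by
    have h0 := G.sum_degrees_eq_twice_card_edges
    have h1 : ((∑ v, G.degree v : ℕ) : ℝ) = ((2 * G.edgeFinset.card : ℕ) : ℝ) := by
      rw [h0]
    push_cast at h1
    convert h1 using 2
  rw [h]
  ring

section EigenGraph
variable {n : ℕ} (G : SimpleGraph (Fin n)) [DecidableRel G.Adj] {α : ℝ}

lemma eig_le_n_sub_one (hα0 : 1/2 ≤ α) (hα1 : α ≤ 1) (i : Fin n) :
    (alphaMatrix_isHermitian G α).eigenvalues i ≤ (n : ℝ) - 1 := by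
  set hA := alphaMatrix_isHermitian G α
  set v : Fin n → ℝ := ⇑(hA.eigenvectorBasis i) with hv
  have h1 : v ⬝ᵥ (alphaMatrix G α *ᵥ v) = hA.eigenvalues i := eig_rayleigh hA i
  have h2 := quad_le G hα0 hα1 v
  have h3 : ∑ u, v u ^ 2 = 1 := eig_unit hA i
  have h4 : (∑ u, v u) ^ 2 ≤ n * 1 := by
    have := cs_ineq v
    rwa [h3] at this
  have h5 : (0:ℝ) ≤ 1 - α := by linarith
  have h6 : (1 - α) * ((∑ u, v u) ^ 2) ≤ (1 - α) * ((n:ℝ) * 1) :=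
    mul_le_mul_of_nonneg_left h4 h5
  rw [h3, mul_one] at h2
  linarith

lemma eig_at_most_one_big (hα0 : 1/2 ≤ α) (hα1 : α ≤ 1) {i j : Fin n} (hij : i ≠ j)
    (hi : α * n - 1 < (alphaMatrix_isHermitian G α).eigenvalues i)
    (hj : α * n - 1 < (alphaMatrix_isHermitian G α).eigenvalues j) : False := by
  set hA := alphaMatrix_isHermitian G α with hhA
  set vi : Fin n → ℝ := ⇑(hA.eigenvectorBasis i) with hvi
  set vj : Fin n → ℝ := ⇑(hA.eigenvectorBasis j) with hvj
  set si := ∑ u, vi u with hsi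
  set sj := ∑ u, vj u with hsj
  -- choose coefficients
  obtain ⟨a, b, hab, hzero⟩ : ∃ a b : ℝ, a^2 + b^2 > 0 ∧ a * si + b * sj = 0 := by
    by_cases h : si = 0 ∧ sj = 0
    · exact ⟨1, 0, by norm_num, by rw [h.1, h.2]; ring⟩
    · refine ⟨sj, -si, ?_, by ring⟩
      rcases not_and_or.mp h with h' | h'
      · have : si^2 > 0 := by positivity
        nlinarith [sq_nonneg sj]
      · have : sj^2 > 0 := by positivity
        nlinarith [sq_nonneg si]
  set x : Fin n → ℝ := a • vi + b • vj with hx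
  have hAx : alphaMatrix G α *ᵥ x
      = (a * hA.eigenvalues i) • vi + (b * hA.eigenvalues j) • vj := by
    rw [hx, Matrix.mulVec_add, Matrix.mulVec_smul, Matrix.mulVec_smul,
      hA.mulVec_eigenvectorBasis, hA.mulVec_eigenvectorBasis, smul_smul, smul_smul]
  have hdots : vi ⬝ᵥ vi = 1 ∧ vj ⬝ᵥ vj = 1 ∧ vi ⬝ᵥ vj = 0 ∧ vj ⬝ᵥ vi = 0 := by
    refine ⟨?_, ?_, ?_, ?_⟩
    · have := eig_dot hA i i; rwa [if_pos rfl] at this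
    · have := eig_dot hA j j; rwa [if_pos rfl] at this
    · have := eig_dot hA i j; rwa [if_neg hij] at this
    · have := eig_dot hA j i; rwa [if_neg (Ne.symm hij)] at this
  obtain ⟨d1, d2, d3, d4⟩ := hdots
  have hquad : x ⬝ᵥ (alphaMatrix G α *ᵥ x)
      = a^2 * hA.eigenvalues i + b^2 * hA.eigenvalues j := by
    rw [hAx, hx]
    simp only [add_dotProduct, smul_dotProduct, dotProduct_add, dotProduct_smul,
      smul_eq_mul, d1, d2, d3, d4]
    ring
  have hnormsq : ∑ u, x u ^ 2 = a^2 + b^2 := by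
    have : ∑ u, x u ^ 2 = x ⬝ᵥ x := Finset.sum_congr rfl fun u _ => (sq _)
    rw [this, hx]
    simp only [add_dotProduct, smul_dotProduct, dotProduct_add, dotProduct_smul,
      smul_eq_mul, d1, d2, d3, d4]
    ring
  have hsum : ∑ u, x u = 0 := by
    rw [hx]
    simp only [Pi.add_apply, Pi.smul_apply, smul_eq_mul, Finset.sum_add_distrib,
      ← Finset.mul_sum]
    rw [← hsi, ← hsj]
    exact hzero
  have h2 := quad_le G hα0 hα1 x
  rw [hquad, hnormsq, hsum] at h2
  have e1 : a^2 * (α * n - 1) ≤ a^2 * hA.eigenvalues i :=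
    mul_le_mul_of_nonneg_left hi.le (sq_nonneg a)
  have e2 : b^2 * (α * n - 1) ≤ b^2 * hA.eigenvalues j :=
    mul_le_mul_of_nonneg_left hj.le (sq_nonneg b)
  by_cases haz : a^2 = 0
  · have hb2 : 0 < b^2 := by nlinarith [sq_nonneg a]
    have e2' : b^2 * (α * n - 1) < b^2 * hA.eigenvalues j :=
      mul_lt_mul_of_pos_left hj hb2
    nlinarith
  · have ha2 : 0 < a^2 := lt_of_le_of_ne (sq_nonneg a) (Ne.symm haz)
    have e1' : a^2 * (α * n - 1) < a^2 * hA.eigenvalues i :=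
      mul_lt_mul_of_pos_left hi ha2
    nlinarith

lemma eig_eq_top (hn : 1 ≤ n) (hα0 : 1/2 ≤ α) (hα1 : α < 1) {i : Fin n}
    (heq : (alphaMatrix_isHermitian G α).eigenvalues i = (n : ℝ) - 1) : G = ⊤ := by
  set hA := alphaMatrix_isHermitian G α with hhA
  set v : Fin n → ℝ := ⇑(hA.eigenvectorBasis i) with hv
  have h1 : v ⬝ᵥ (alphaMatrix G α *ᵥ v) = (n:ℝ) - 1 := by rw [eig_rayleigh hA i, heq]
  have h2 := quad_le G hα0 (le_of_lt hα1) v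
  have h3 : ∑ u, v u ^ 2 = 1 := eig_unit hA i
  rw [h1, h3, mul_one] at h2
  -- (n:ℝ) - 1 ≤ (αn - 1) + (1-α) (Σv)², so n(1-α) ≤ (1-α)(Σv)², so n ≤ (Σv)²
  have h4 : (n:ℝ) ≤ (∑ u, v u) ^ 2 := by
    have hpos : (0:ℝ) < 1 - α := by linarith
    nlinarith
  have h5 : (∑ u, v u) ^ 2 ≤ n * 1 := by
    have := cs_ineq v
    rwa [h3] at this
  have h6 : (∑ u, v u) ^ 2 = n * (∑ u, v u ^ 2) := by rw [h3]; linarith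
  have hconst := cs_eq_const v h6
  -- v is constant, nonzero
  obtain ⟨w0⟩ : Nonempty (Fin n) := ⟨⟨0, by omega⟩⟩
  set t := v w0 with ht
  have hvt : ∀ u, v u = t := fun u => hconst u w0
  have htne : t ≠ 0 := by
    intro h0
    have : ∑ u, v u ^ 2 = 0 := by
      refine Finset.sum_eq_zero fun u _ => ?_
      rw [hvt u, h0]; ring
    rw [h3] at this; norm_num at this
  -- eigen equation at each vertex
  have hdeg : ∀ w : Fin n, (G.degree w : ℝ) = (n:ℝ) - 1 := by
    intro w
    have he := congrFun (hA.mulVec_eigenvectorBasis i) w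
    rw [← hv] at he  -- maybe not needed
    have hlhs : (alphaMatrix G α *ᵥ v) w = t * G.degree w := by
      rw [Matrix.mulVec]
      have : (alphaMatrix G α w) ⬝ᵥ v = ∑ u, alphaMatrix G α w u * t := by
        rw [dotProduct]
        exact Finset.sum_congr rfl fun u _ => by rw [hvt u]
      rw [this, ← Finset.sum_mul, alphaMatrix_rowsum]
      ring
    have hrhs : (hA.eigenvalues i • v) w = ((n:ℝ) - 1) * t := by
      simp only [Pi.smul_apply, smul_eq_mul, heq, hvt w]
    have : t * G.degree w = ((n:ℝ)-1) * t := by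
      rw [← hlhs, ← hrhs]
      exact he
    have := mul_left_cancel₀ htne (by linarith : t * (G.degree w : ℝ) = t * ((n:ℝ)-1))
    linarith
  -- full degree implies complete graph
  ext a b
  simp only [SimpleGraph.top_adj]
  constructor
  · exact fun h => G.ne_of_adj h
  · intro hab
    have hsub : G.neighborFinset a ⊆ Finset.univ.erase a := by
      intro u hu
      rw [Finset.mem_erase]
      have hadj : G.Adj a u := (G.mem_neighborFinset a u).mp hu
      exact ⟨(G.ne_of_adj hadj).symm, Finset.mem_univ u⟩
    have hcard : (Finset.univ.erase a).card ≤ (G.neighborFinset a).card := by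
      rw [Finset.card_erase_of_mem (Finset.mem_univ a), Finset.card_univ, Fintype.card_fin,
        SimpleGraph.card_neighborFinset_eq_degree]
      have := hdeg a
      have : G.degree a = n - 1 := by
        have hlt := G.degree_lt_card_verts a
        simp only [Fintype.card_fin] at hlt
        have : ((G.degree a : ℝ)) = ((n - 1 : ℕ) : ℝ) := by
          rw [hdeg a]; push_cast [Nat.cast_sub hn]; ring
        exact_mod_cast this
      omega
    have heq' := Finset.eq_of_subset_of_card_le hsub hcard
    have : b ∈ G.neighborFinset a := by
      rw [heq', Finset.mem_erase]
      exact ⟨Ne.symm hab, Finset.mem_univ b⟩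
    exact (G.mem_neighborFinset a b).mp this

end EigenGraph
section CompleteGraph
variable {n : ℕ} (G : SimpleGraph (Fin n)) [DecidableRel G.Adj] {α : ℝ}

lemma complete_degree (hc : ∀ v w : Fin n, v ≠ w → G.Adj v w) (hn : 1 ≤ n) (v : Fin n) :
    G.degree v = n - 1 := by
  have h : G.neighborFinset v = Finset.univ.erase v := by
    ext u
    rw [Finset.mem_erase, SimpleGraph.mem_neighborFinset]
    constructor
    · exact fun h => ⟨(G.ne_of_adj h).symm, Finset.mem_univ u⟩
    · exact fun h => (hc u v h.1).symm
  rw [← SimpleGraph.card_neighborFinset_eq_degree, h,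
    Finset.card_erase_of_mem (Finset.mem_univ v), Finset.card_univ, Fintype.card_fin]

lemma complete_two_m (hc : ∀ v w : Fin n, v ≠ w → G.Adj v w) (hn : 1 ≤ n) :
    2 * G.edgeFinset.card = n * (n - 1) := by
  rw [← G.sum_degrees_eq_twice_card_edges,
    Finset.sum_congr rfl (fun v _ => complete_degree G hc hn v), Finset.sum_const,
    Finset.card_univ, Fintype.card_fin, smul_eq_mul]

lemma complete_eig_dichotomy (hc : ∀ v w : Fin n, v ≠ w → G.Adj v w) (hn : 1 ≤ n) (i : Fin n) :
    (alphaMatrix_isHermitian G α).eigenvalues i = (n : ℝ) - 1 ∨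
    (alphaMatrix_isHermitian G α).eigenvalues i = α * n - 1 := by
  set hA := alphaMatrix_isHermitian G α with hhA
  set ρ := hA.eigenvalues i with hρ
  set v : Fin n → ℝ := ⇑(hA.eigenvectorBasis i) with hv
  have he : alphaMatrix G α *ᵥ v = ρ • v := hA.mulVec_eigenvectorBasis i
  set S := ∑ u, v u with hS
  have hrow : ∀ w, (alphaMatrix G α *ᵥ v) w = (α * n - 1) * v w + (1 - α) * S := by
    intro w
    rw [Matrix.mulVec, dotProduct]
    have step : ∀ u, alphaMatrix G α w u * v u
        = (if w = u then (α * ((n:ℝ) - 1) - (1 - α)) * v u else 0) + (1 - α) * v u := by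
      intro u
      rw [alphaMatrix_apply']
      by_cases h : w = u
      · subst h
        rw [if_pos rfl, if_neg (G.irrefl), if_pos rfl, complete_degree G hc hn w]
        push_cast [Nat.cast_sub hn]
        ring
      · rw [if_neg h, if_neg h, if_pos (hc w u h)]
        ring
    rw [Finset.sum_congr rfl (fun u _ => step u), Finset.sum_add_distrib,
      Finset.sum_ite_eq Finset.univ w (fun u => (α * ((n:ℝ) - 1) - (1 - α)) * v u),
      if_pos (Finset.mem_univ w), ← Finset.mul_sum, ← hS]
    ring
  have heig : ∀ w, ρ * v w = (α * n - 1) * v w + (1 - α) * S := by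
    intro w
    have h0 := congrFun he w
    rw [hrow w] at h0
    have h1 : (ρ • v) w = ρ * v w := rfl
    rw [h1] at h0
    rw [h0]
  by_cases hS0 : S = 0
  · right
    have hwne : ∃ w, v w ≠ 0 := by
      by_contra hall
      push_neg at hall
      have h2 : ∑ u, v u ^ 2 = 0 := Finset.sum_eq_zero fun u _ => by rw [hall u]; ring
      have h3 : ∑ u, v u ^ 2 = 1 := eig_unit hA i
      rw [h2] at h3
      norm_num at h3
    obtain ⟨w, hw⟩ := hwne
    have := heig w
    rw [hS0, mul_zero, add_zero] at this
    exact mul_right_cancel₀ hw this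
  · left
    have hsum : ρ * S = ((n:ℝ) - 1) * S := by
      have h1 : ∑ w, ρ * v w = ∑ w, ((α * n - 1) * v w + (1 - α) * S) :=
        Finset.sum_congr rfl fun w _ => heig w
      rw [Finset.sum_add_distrib, ← Finset.mul_sum, ← Finset.mul_sum, ← hS,
        Finset.sum_const, Finset.card_univ, Fintype.card_fin, nsmul_eq_mul] at h1
      rw [h1]
      ring
    have := mul_right_cancel₀ hS0 hsum
    exact this

end CompleteGraph
section Summary
variable {n : ℕ} (G : SimpleGraph (Fin n)) [DecidableRel G.Adj] {α : ℝ}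

lemma complete_summary (hn : 3 ≤ n) (hα0 : 1/2 ≤ α) (hα1 : α < 1)
    (hc : ∀ v w : Fin n, v ≠ w → G.Adj v w) :
    (Finset.univ.filter
      (fun i => 2 * α * (G.edgeFinset.card : ℝ) / n ≤ (alphaMatrix_isHermitian G α).eigenvalues i)).card = 1 ∧
    alphaEnergy G α = 2 * ((n:ℝ) - 1) * (1 - α) ∧
    2 * (G.edgeFinset.card : ℝ) = n * ((n:ℝ) - 1) := by
  have hn1 : 1 ≤ n := by omega
  have hnR : (0:ℝ) < n := by exact_mod_cast Nat.lt_of_lt_of_le (by norm_num) hn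
  set hA := alphaMatrix_isHermitian G α with hhA
  have hm : 2 * (G.edgeFinset.card : ℝ) = n * ((n:ℝ) - 1) := by
    have h0 := complete_two_m G hc hn1
    have h1 : ((2 * G.edgeFinset.card : ℕ) : ℝ) = ((n * (n-1) : ℕ) : ℝ) := by rw [h0]
    push_cast [Nat.cast_sub hn1] at h1
    convert h1 using 2 <;> push_cast <;> ring
  have hcval : 2 * α * (G.edgeFinset.card : ℝ) / n = α * ((n:ℝ) - 1) := by
    rw [div_eq_iff hnR.ne']
    linear_combination α * hm
  have hdich := fun i => complete_eig_dichotomy G (α := α) hc hn1 i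
  have hone : (0:ℝ) < 1 - α := by linarith
  have hne : ((n:ℝ) - 1) ≠ α * n - 1 := by
    intro h
    nlinarith
  have hfilter_eq : (Finset.univ.filter
      (fun i => 2 * α * (G.edgeFinset.card : ℝ) / n ≤ hA.eigenvalues i))
      = Finset.univ.filter (fun i => hA.eigenvalues i = (n:ℝ) - 1) := by
    refine Finset.filter_congr fun i _ => ?_
    rw [hcval]
    rcases hdich i with h | h
    · rw [h]
      simp only [iff_true_intro rfl, iff_true]
      nlinarith
    · rw [h]
      constructor
      · intro hle
        nlinarith
      · intro heq
        exact absurd heq.symm hne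
  set K := Finset.univ.filter (fun i => hA.eigenvalues i = (n:ℝ) - 1) with hK
  set L := Finset.univ.filter (fun i => ¬ hA.eigenvalues i = (n:ℝ) - 1) with hL
  set k := K.card with hkdef
  set l := L.card with hldef
  have htrace : ∑ i, hA.eigenvalues i = α * (n * ((n:ℝ) - 1)) := by
    rw [eig_sum_trace hA, alphaMatrix_trace]
    nlinarith [hm]
  have hKsum : ∑ i ∈ K, hA.eigenvalues i = (k:ℝ) * ((n:ℝ) - 1) := by
    rw [Finset.sum_congr rfl (fun i hi => (Finset.mem_filter.mp hi).2), Finset.sum_const,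
      nsmul_eq_mul]
  have hKcsum : ∑ i ∈ L, hA.eigenvalues i = (l:ℝ) * (α * n - 1) := by
    rw [Finset.sum_congr rfl (fun i hi => ?_), Finset.sum_const, nsmul_eq_mul]
    rcases hdich i with h | h
    · exact absurd h (Finset.mem_filter.mp hi).2
    · exact h
  have hcardsum : k + l = n := by
    rw [hkdef, hldef, hK, hL, Finset.card_filter_add_card_filter_not, Finset.card_univ,
      Fintype.card_fin]
  have heq : (k:ℝ) * ((n:ℝ) - 1) + (l:ℝ) * (α * n - 1) = α * (n * ((n:ℝ) - 1)) :=
    calc (k:ℝ) * ((n:ℝ) - 1) + (l:ℝ) * (α * n - 1)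
        = (∑ i ∈ K, hA.eigenvalues i) + ∑ i ∈ L, hA.eigenvalues i := by rw [hKsum, hKcsum]
      _ = ∑ i, hA.eigenvalues i := Finset.sum_filter_add_sum_filter_not Finset.univ _ _
      _ = α * (n * ((n:ℝ) - 1)) := htrace
  have hlval : (l:ℝ) = (n:ℝ) - k := by
    have h0 : ((k:ℝ)) + l = n := by exact_mod_cast hcardsum
    linarith
  have hkreal : (k:ℝ) = 1 := by
    have hfac : (k:ℝ) * ((n:ℝ) * (1 - α)) = 1 * ((n:ℝ) * (1 - α)) := by
      rw [hlval] at heq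
      linear_combination heq
    have hpos : ((n:ℝ) * (1 - α)) ≠ 0 := by positivity
    exact mul_right_cancel₀ hpos hfac
  have hk1 : k = 1 := by exact_mod_cast hkreal
  refine ⟨by rw [hfilter_eq]; exact hk1, ?_, hm⟩
  unfold alphaEnergy
  have habs : ∀ i : Fin n, |hA.eigenvalues i - 2 * α * (G.edgeFinset.card : ℝ) / n|
      = if hA.eigenvalues i = (n:ℝ) - 1 then ((n:ℝ) - 1) * (1 - α) else (1 - α) := by
    intro i
    rw [hcval]
    rcases hdich i with h | h
    · rw [if_pos h, h, abs_of_nonneg (by nlinarith)]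
      ring
    · rw [if_neg (fun hcon : hA.eigenvalues i = (n:ℝ) - 1 => hne (by rw [← hcon, h])), h,
        abs_of_nonpos (by nlinarith)]
      ring
  rw [Finset.sum_congr rfl (fun i _ => habs i), Finset.sum_ite, Finset.sum_const,
    Finset.sum_const, nsmul_eq_mul, nsmul_eq_mul]
  have hlreal : (l:ℝ) = (n:ℝ) - 1 := by rw [hlval, hkreal]
  rw [← hkdef]  -- maybe noop
  rw [show (#(Finset.univ.filter (fun i => hA.eigenvalues i = (n:ℝ) - 1)) : ℝ) = (k:ℝ) from rfl,
    show (#(Finset.univ.filter (fun i => ¬ hA.eigenvalues i = (n:ℝ) - 1)) : ℝ) = (l:ℝ) from rfl,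
    hkreal, hlreal]
  ring

end Summary
theorem stmt_11 {n : ℕ} (hn : 3 ≤ n) (G : SimpleGraph (Fin n)) [DecidableRel G.Adj]
    (hG : G.Connected) (α : ℝ) (hα0 : 1 / 2 ≤ α) (hα1 : α < 1)
    (η : ℕ)
    (hη : η = (Finset.univ.filter
      (fun i => 2 * α * (G.edgeFinset.card : ℝ) / n ≤ (alphaMatrix_isHermitian G α).eigenvalues i)).card) :
    alphaEnergy G α ≤ 2 * ((n : ℝ) - 1) + 2 * ((η : ℝ) - 1) * (α * n - 1) - 4 * α * η * (G.edgeFinset.card : ℝ) / n ∧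
    (alphaEnergy G α = 2 * ((n : ℝ) - 1) + 2 * ((η : ℝ) - 1) * (α * n - 1) - 4 * α * η * (G.edgeFinset.card : ℝ) / n ↔ G = ⊤) := by
  have hn1 : 1 ≤ n := by omega
  have hnR : (0:ℝ) < n := by exact_mod_cast Nat.lt_of_lt_of_le (by norm_num) hn
  have hα1' : α ≤ 1 := hα1.le
  set hA := alphaMatrix_isHermitian G α with hhA
  set c : ℝ := 2 * α * (G.edgeFinset.card : ℝ) / n with hcdef
  set S := Finset.univ.filter (fun i => c ≤ hA.eigenvalues i) with hSdef
  -- sum of deviations is zero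
  have hsum0 : ∑ i, (hA.eigenvalues i - c) = 0 := by
    rw [Finset.sum_sub_distrib, eig_sum_trace hA, alphaMatrix_trace, Finset.sum_const,
      Finset.card_univ, Fintype.card_fin, nsmul_eq_mul, hcdef]
    field_simp
    ring
  -- energy as twice sum over S
  have henergy : alphaEnergy G α = 2 * ∑ i ∈ S, (hA.eigenvalues i - c) := by
    unfold alphaEnergy
    have hsplit := Finset.sum_filter_add_sum_filter_not Finset.univ
      (fun i => c ≤ hA.eigenvalues i) (fun i => |hA.eigenvalues i - c|)
    have hsplit2 := Finset.sum_filter_add_sum_filter_not Finset.univ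
      (fun i => c ≤ hA.eigenvalues i) (fun i => hA.eigenvalues i - c)
    have h1 : ∑ i ∈ S, |hA.eigenvalues i - c| = ∑ i ∈ S, (hA.eigenvalues i - c) :=
      Finset.sum_congr rfl fun i hi =>
        abs_of_nonneg (by have := (Finset.mem_filter.mp hi).2; linarith)
    have h2 : ∑ i ∈ Finset.univ.filter (fun i => ¬ c ≤ hA.eigenvalues i), |hA.eigenvalues i - c|
        = - ∑ i ∈ Finset.univ.filter (fun i => ¬ c ≤ hA.eigenvalues i), (hA.eigenvalues i - c) := by
      rw [← Finset.sum_neg_distrib]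
      refine Finset.sum_congr rfl fun i hi => ?_
      have := (Finset.mem_filter.mp hi).2
      rw [abs_of_neg (by push_neg at this; linarith)]
    have h3 : ∑ i ∈ Finset.univ.filter (fun i => ¬ c ≤ hA.eigenvalues i), (hA.eigenvalues i - c)
        = - ∑ i ∈ S, (hA.eigenvalues i - c) := by
      rw [hsum0] at hsplit2
      rw [hSdef]
      linarith
    calc ∑ i, |hA.eigenvalues i - c|
        = ∑ i ∈ S, |hA.eigenvalues i - c|
          + ∑ i ∈ Finset.univ.filter (fun i => ¬ c ≤ hA.eigenvalues i), |hA.eigenvalues i - c| :=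
            hsplit.symm
      _ = 2 * ∑ i ∈ S, (hA.eigenvalues i - c) := by rw [h1, h2, h3]; ring
  by_cases hGtop : G = ⊤
  · -- complete graph: equality
    have hcomp : ∀ v w : Fin n, v ≠ w → G.Adj v w := by
      intro v w hvw
      rw [hGtop]
      exact hvw
    obtain ⟨hcard1, hE, hm⟩ := complete_summary G hn hα0 hα1 hcomp
    have hη1 : η = 1 := by rw [hη]; exact hcard1
    have hRHS : 2 * ((n : ℝ) - 1) + 2 * ((η : ℝ) - 1) * (α * n - 1)
        - 4 * α * η * (G.edgeFinset.card : ℝ) / n = 2 * ((n:ℝ) - 1) * (1 - α) := by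
      have h4 : 4 * α * 1 * (G.edgeFinset.card : ℝ) / (n:ℝ) = 2 * α * ((n:ℝ) - 1) := by
        rw [div_eq_iff hnR.ne']
        linear_combination 2 * α * hm
      rw [hη1]
      push_cast
      rw [h4]
      ring
    rw [hRHS, hE]
    exact ⟨le_refl _, ⟨fun _ => hGtop, fun _ => rfl⟩⟩
  · -- non-complete graph: strict inequality
    have hrlt : ∀ i, hA.eigenvalues i < (n:ℝ) - 1 := fun i =>
      lt_of_le_of_ne (eig_le_n_sub_one G hα0 hα1' i)
        (fun h => hGtop (eig_eq_top G hn1 hα0 hα1 h))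
    -- S is nonempty
    have hSne : S.Nonempty := by
      by_contra hS
      rw [Finset.not_nonempty_iff_eq_empty] at hS
      have hall : ∀ i : Fin n, hA.eigenvalues i - c < 0 := by
        intro i
        have : i ∉ S := by rw [hS]; exact Finset.notMem_empty i
        rw [hSdef, Finset.mem_filter] at this
        push_neg at this
        have := this (Finset.mem_univ i)
        linarith
      have hne : (Finset.univ : Finset (Fin n)).Nonempty := ⟨⟨0, by omega⟩, Finset.mem_univ _⟩
      have : ∑ i, (hA.eigenvalues i - c) < 0 := by
        calc ∑ i, (hA.eigenvalues i - c) < ∑ _i : Fin n, (0:ℝ) :=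
          Finset.sum_lt_sum_of_nonempty hne fun i _ => hall i
        _ = 0 := by simp
      linarith [hsum0]
    have hη1 : 1 ≤ η := by
      rw [hη]
      exact Finset.card_pos.mpr hSne
    have hηS : η = S.card := hη
    -- split S by whether eigenvalue exceeds α n - 1
    set S1 := S.filter (fun i => α * n - 1 < hA.eigenvalues i) with hS1def
    set S2 := S.filter (fun i => ¬ (α * n - 1 < hA.eigenvalues i)) with hS2def
    have hsplitS : ∑ i ∈ S1, (hA.eigenvalues i - c) + ∑ i ∈ S2, (hA.eigenvalues i - c)
        = ∑ i ∈ S, (hA.eigenvalues i - c) :=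
      Finset.sum_filter_add_sum_filter_not S _ _
    have hcards : S1.card + S2.card = S.card :=
      Finset.card_filter_add_card_filter_not _
    have hS1card : S1.card ≤ 1 := by
      rw [Finset.card_le_one]
      intro i hi j hj
      by_contra hij
      exact eig_at_most_one_big G hα0 hα1' hij
        ((Finset.mem_filter.mp hi).2) ((Finset.mem_filter.mp hj).2)
    have hS2bound : ∑ i ∈ S2, (hA.eigenvalues i - c) ≤ S2.card * (α * n - 1 - c) := by
      have := Finset.sum_le_card_nsmul S2 (fun i => hA.eigenvalues i - c) (α * n - 1 - c)
        (fun i hi => by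
          have h := (Finset.mem_filter.mp hi).2
          push_neg at h
          show hA.eigenvalues i - c ≤ α * n - 1 - c
          linarith)
      rwa [nsmul_eq_mul] at this
    have hmain : ∑ i ∈ S, (hA.eigenvalues i - c)
        < ((n:ℝ) - 1 - c) + ((η:ℝ) - 1) * (α * n - 1 - c) := by
      interval_cases h1c : S1.card
      · -- S1 empty
        have hS1emp : S1 = ∅ := Finset.card_eq_zero.mp h1c
        have hS2card : S2.card = η := by omega
        have hsum1 : ∑ i ∈ S1, (hA.eigenvalues i - c) = 0 := by rw [hS1emp]; simp
        have hb : ∑ i ∈ S, (hA.eigenvalues i - c) ≤ (η:ℝ) * (α * n - 1 - c) := by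
          rw [← hsplitS, hsum1, zero_add]
          calc ∑ i ∈ S2, (hA.eigenvalues i - c) ≤ S2.card * (α * n - 1 - c) := hS2bound
            _ = (η:ℝ) * (α * n - 1 - c) := by rw [hS2card]
        have hgap : (η:ℝ) * (α * n - 1 - c) < ((n:ℝ) - 1 - c) + ((η:ℝ) - 1) * (α * n - 1 - c) := by
          have : (0:ℝ) < (n:ℝ) * (1 - α) := by nlinarith
          nlinarith
        linarith
      · -- S1 = {i0}
        obtain ⟨i0, hi0⟩ := Finset.card_eq_one.mp h1c
        have hS2card : (S2.card : ℝ) = (η:ℝ) - 1 := by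
          have : S2.card = η - 1 := by omega
          rw [this]
          push_cast [Nat.cast_sub hη1]
          ring
        have hsum1 : ∑ i ∈ S1, (hA.eigenvalues i - c) < (n:ℝ) - 1 - c := by
          rw [hi0, Finset.sum_singleton]
          have := hrlt i0
          linarith
        rw [← hsplitS]
        have h2' : ∑ i ∈ S2, (hA.eigenvalues i - c) ≤ ((η:ℝ) - 1) * (α * n - 1 - c) := by
          rw [← hS2card]
          exact hS2bound
        linarith
    have hfinal : alphaEnergy G α < 2 * ((n : ℝ) - 1) + 2 * ((η : ℝ) - 1) * (α * n - 1)
        - 4 * α * η * (G.edgeFinset.card : ℝ) / n := by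
      rw [henergy]
      have halg : 2 * (((n:ℝ) - 1 - c) + ((η:ℝ) - 1) * (α * n - 1 - c))
          = 2 * ((n : ℝ) - 1) + 2 * ((η : ℝ) - 1) * (α * n - 1)
            - 4 * α * η * (G.edgeFinset.card : ℝ) / n := by
        rw [hcdef]
        field_simp
        ring
      linarith
    exact ⟨hfinal.le, ⟨fun h => absurd h (ne_of_lt hfinal), fun h => absurd h hGtop⟩⟩
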